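/- Let V be a frame. For a nonempty family (X_i)_{i∈I} with X_i ≤ Y for all i, the following are equivalent: (1) ⋁_{i∈I} X_i = Y; (2) for every Z ≤ Y, Z = ⋁_{i∈I} (Z ∧ X_i); (3) the morphism (X_i)_{i∈I} ≤ Y in Fam(V) is a stable regular epimorphism. -/

import Mathlib

open CategoryTheory CategoryTheory.Limits

universe v u

/-- An object of `Fam V`: a set-indexed family of objects of `V`
(the free coproduct completion of `V`). -/
structure Fam (V : Type u) [Category.{v} V] : Type (max (u + 1) v) where
  ι : Type
  obj : ι → V

namespace Fam

variable {V : Type u} [Category.{v} V]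

/-- A morphism of families: an index function together with componentwise morphisms. -/
structure Hom (X Y : Fam V) where
  idx : X.ι → Y.ι
  map : ∀ i, X.obj i ⟶ Y.obj (idx i)

instance : Category (Fam V) where
  Hom X Y := Fam.Hom X Y
  id X := ⟨fun i => i, fun i => 𝟙 _⟩
  comp f g := ⟨fun i => g.idx (f.idx i), fun i => f.map i ≫ g.map (f.idx i)⟩
  id_comp f := by cases f; simp only [Category.id_comp]
  comp_id f := by cases f; simp only [Category.comp_id]
  assoc f g h := by cases f; cases g; cases h; simp only [Category.assoc]

/-- The singleton family on an object of `V`. -/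
def single (Y : V) : Fam V := ⟨PUnit, fun _ => Y⟩

/-- The family with index set `I` and components `X i`. -/
def mk' (I : Type) (X : I → V) : Fam V := ⟨I, X⟩

/-- The morphism to a singleton family determined by componentwise morphisms. -/
def toSingle {I : Type} (X : I → V) (Y : V) (φ : ∀ i, X i ⟶ Y) :
    mk' I X ⟶ single Y :=
  ⟨fun _ => PUnit.unit, φ⟩

end Fam

/-- The morphism `(X_i)_{i ∈ I} ≤ Y` in `Fam V` for a thin category (preorder) `V`. -/
def Fam.leHom {V : Type} [Preorder V] {I : Type} (X : I → V) (Y : V) (h : ∀ i, X i ≤ Y) :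
    Fam.mk' I X ⟶ Fam.single Y :=
  Fam.toSingle X Y fun i => homOfLE (h i)

section Aux

variable {V : Type} [Order.Frame V]

lemma Fam.hom_ext' {A B : Fam V} {f g : A ⟶ B}
    (hidx : Fam.Hom.idx f = Fam.Hom.idx g) : f = g := by
  change Fam.Hom A B at f g
  cases f with
  | mk fi fm =>
    cases g with
    | mk gi gm =>
      dsimp at hidx
      subst hidx
      congr 1
      exact Subsingleton.elim _ _

lemma Fam.hom_single_ext {A : Fam V} {Y : V} (f g : A ⟶ Fam.single Y) : f = g :=
  Fam.hom_ext' (funext fun _ =>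
    (inferInstance : Subsingleton PUnit).elim _ _)

/-- The "kernel pair" object of a morphism in `Fam V`. -/
def Fam.kpObj {A B : Fam V} (f : A ⟶ B) : Fam V :=
  ⟨{p : A.ι × A.ι // Fam.Hom.idx f p.1 = Fam.Hom.idx f p.2},
    fun p => A.obj p.1.1 ⊓ A.obj p.1.2⟩

/-- First projection out of the kernel pair object. -/
def Fam.kpLeft {A B : Fam V} (f : A ⟶ B) : Fam.kpObj f ⟶ A :=
  ⟨fun p => p.1.1, fun p => homOfLE inf_le_left⟩

/-- Second projection out of the kernel pair object. -/
def Fam.kpRight {A B : Fam V} (f : A ⟶ B) : Fam.kpObj f ⟶ A :=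
  ⟨fun p => p.1.2, fun p => homOfLE inf_le_right⟩

/-- If the index map of `f` is surjective and each object of `B` is covered by the objects
of `A` lying over it, then `f` is a regular epimorphism in `Fam V`. -/
noncomputable def Fam.regularEpiOfCover {A B : Fam V} (f : A ⟶ B)
    (hsurj : ∀ b, ∃ a, Fam.Hom.idx f a = b)
    (hcov : ∀ b, B.obj b ≤ ⨆ a : {a // Fam.Hom.idx f a = b}, A.obj a.1) :
    RegularEpi f := by
  choose σ hσ using hsurj
  have hconst : ∀ (s : Cofork (Fam.kpLeft f) (Fam.kpRight f)) (a a' : A.ι),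
      Fam.Hom.idx f a = Fam.Hom.idx f a' →
      Fam.Hom.idx s.π a = Fam.Hom.idx s.π a' := by
    intro s a a' haa
    have hc := congrArg Fam.Hom.idx s.condition
    exact congrFun hc ⟨(a, a'), haa⟩
  exact
    { W := Fam.kpObj f
      left := Fam.kpLeft f
      right := Fam.kpRight f
      w := Fam.hom_ext' (funext fun p => p.2)
      isColimit := Cofork.IsColimit.mk _
        (fun s =>
          ⟨fun b => Fam.Hom.idx s.π (σ b),
           fun b => homOfLE <| (hcov b).trans <| iSup_le fun a =>
             (leOfHom (Fam.Hom.map s.π a.1)).trans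
               (le_of_eq (congrArg s.pt.obj
                 (hconst s a.1 (σ b) (a.2.trans (hσ b).symm))))⟩)
        (fun s => Fam.hom_ext' (funext fun a =>
          hconst s (σ (Fam.Hom.idx f a)) a (hσ (Fam.Hom.idx f a))))
        (fun s m hm => Fam.hom_ext' (funext fun b => by
          have h1 : Fam.Hom.idx m (Fam.Hom.idx f (σ b)) = Fam.Hom.idx s.π (σ b) :=
            congrFun (congrArg Fam.Hom.idx hm) (σ b)
          rw [← hσ b]
          exact h1.trans
            (hconst s (σ b) (σ (Fam.Hom.idx f (σ b)))
              (hσ (Fam.Hom.idx f (σ b))).symm))) }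

/-- Regular epimorphisms are stable under precomposition with isomorphisms. -/
noncomputable def regularEpiOfIsoComp {C' : Type*} [Category C'] {P P' Q : C'}
    (e : P ≅ P') (f : P' ⟶ Q) (hf : RegularEpi f) : RegularEpi (e.hom ≫ f) where
  W := hf.W
  left := hf.left ≫ e.inv
  right := hf.right ≫ e.inv
  w := by
    simp only [Category.assoc, Iso.inv_hom_id_assoc]
    exact hf.w
  isColimit := by
    refine Cofork.IsColimit.mk _
      (fun s => Cofork.IsColimit.desc hf.isColimit (e.inv ≫ s.π)
        (by have hc := s.condition; simp only [Category.assoc] at hc ⊢; exact hc))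
      (fun s => ?_) (fun s m hm => ?_)
    · have hd := Cofork.IsColimit.π_desc' hf.isColimit (e.inv ≫ s.π)
        (by have hc := s.condition; simp only [Category.assoc] at hc ⊢; exact hc)
      simp only [Cofork.π_ofπ] at hd ⊢
      rw [Category.assoc, hd, Iso.hom_inv_id_assoc]
    · refine Cofork.IsColimit.hom_ext hf.isColimit ?_
      have hd := Cofork.IsColimit.π_desc' hf.isColimit (e.inv ≫ s.π)
        (by have hc := s.condition; simp only [Category.assoc] at hc ⊢; exact hc)
      simp only [Cofork.π_ofπ] at hd hm ⊢
      rw [hd, ← hm]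
      simp

/-- The canonical pullback object of `g : C ⟶ single Y` along `leHom X Y h`. -/
def Fam.pbObj (C : Fam V) {I : Type} (X : I → V) : Fam V :=
  ⟨C.ι × I, fun p => C.obj p.1 ⊓ X p.2⟩

/-- First projection from the canonical pullback. -/
def Fam.pbFst (C : Fam V) {I : Type} (X : I → V) : Fam.pbObj C X ⟶ C :=
  ⟨Prod.fst, fun p => homOfLE inf_le_left⟩

/-- Second projection from the canonical pullback. -/
def Fam.pbSnd (C : Fam V) {I : Type} (X : I → V) : Fam.pbObj C X ⟶ Fam.mk' I X :=
  ⟨Prod.snd, fun p => homOfLE inf_le_right⟩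

/-- The canonical pullback square of `g : C ⟶ single Y` along `leHom X Y h`. -/
lemma Fam.isPullback_canonical {I : Type} (X : I → V) (Y : V) (h : ∀ i, X i ≤ Y)
    {C : Fam V} (g : C ⟶ Fam.single Y) :
    IsPullback (Fam.pbFst C X) (Fam.pbSnd C X) g (Fam.leHom X Y h) := by
  refine IsPullback.of_isLimit (c := PullbackCone.mk _ _ (Fam.hom_single_ext _ _)) ?_
  refine PullbackCone.IsLimit.mk _
    (fun s =>
      ⟨fun p => (Fam.Hom.idx s.fst p, Fam.Hom.idx s.snd p),
       fun p => homOfLE (le_inf (leOfHom (Fam.Hom.map s.fst p))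
         (leOfHom (Fam.Hom.map s.snd p)))⟩)
    (fun s => Fam.hom_ext' rfl) (fun s => Fam.hom_ext' rfl)
    (fun s m hm1 hm2 => Fam.hom_ext' (funext fun p => ?_))
  have h1 := congrFun (congrArg Fam.Hom.idx hm1) p
  have h2 := congrFun (congrArg Fam.Hom.idx hm2) p
  exact Prod.ext h1 h2

/-- From a regular-epi presentation of `leHom` one recovers the sup condition. -/
lemma Fam.sup_eq_of_regularEpi {I : Type} (X : I → V) (Y : V) (h : ∀ i, X i ≤ Y)
    (hr : RegularEpi (Fam.leHom X Y h)) : (⨆ i, X i) = Y := by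
  refine le_antisymm (iSup_le h) ?_
  have hw : hr.left ≫ Fam.toSingle X _ (fun i => homOfLE (le_iSup X i)) =
      hr.right ≫ Fam.toSingle X _ (fun i => homOfLE (le_iSup X i)) :=
    Fam.hom_single_ext _ _
  have d : Fam.single Y ⟶ Fam.single (⨆ i, X i) :=
    Cofork.IsColimit.desc hr.isColimit _ hw
  exact leOfHom (Fam.Hom.map d PUnit.unit)

end Aux

/-- Let `V` be a frame.  For a nonempty family `(X_i)_{i ∈ I}` with
`X_i ≤ Y` for all `i`, the following are equivalent:
(1) `⋁_i X_i = Y`;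
(2) for every `Z ≤ Y`, `Z = ⋁_i (Z ⊓ X_i)`;
(3) the morphism `(X_i)_{i ∈ I} ≤ Y` in `Fam V` is a stable regular epimorphism. -/
theorem frame_fam_stable_regularEpi_tfae {V : Type} [Order.Frame V]
    {I : Type} [Nonempty I] (X : I → V) (Y : V) (h : ∀ i, X i ≤ Y) :
    ((⨆ i, X i) = Y ↔ ∀ Z : V, Z ≤ Y → Z = ⨆ i, Z ⊓ X i) ∧
    ((⨆ i, X i) = Y ↔
      (Nonempty (RegularEpi (Fam.leHom X Y h)) ∧
        ∀ {P C : Fam V} (g : C ⟶ Fam.single Y) (fst : P ⟶ C) (snd : P ⟶ Fam.mk' I X),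
          IsPullback fst snd g (Fam.leHom X Y h) → Nonempty (RegularEpi fst))) := by
  constructor
  · constructor
    · intro hs Z hZ
      calc Z = Z ⊓ Y := (inf_eq_left.mpr hZ).symm
        _ = Z ⊓ ⨆ i, X i := by rw [hs]
        _ = ⨆ i, Z ⊓ X i := inf_iSup_eq _ _
    · intro H
      have hY := H Y le_rfl
      have : ∀ i, Y ⊓ X i = X i := fun i => inf_eq_right.mpr (h i)
      calc (⨆ i, X i) = ⨆ i, Y ⊓ X i := by simp only [this]
        _ = Y := hY.symm
  · constructor
    · intro hs
      constructor
      · refine ⟨Fam.regularEpiOfCover (Fam.leHom X Y h)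
          (fun b => ⟨Classical.arbitrary I,
            (inferInstance : Subsingleton PUnit).elim _ _⟩)
          (fun b => ?_)⟩
        exact le_trans hs.ge (iSup_le fun i =>
          le_iSup_of_le ⟨i, (inferInstance : Subsingleton PUnit).elim _ _⟩ le_rfl)
      · intro P C g fst snd hPB
        have hP₀ := Fam.isPullback_canonical X Y h g
        have hre₀ : RegularEpi (Fam.pbFst C X) := by
          refine Fam.regularEpiOfCover _
            (fun c => ⟨(c, Classical.arbitrary I), rfl⟩) (fun c => ?_)
          have hcY : C.obj c ≤ Y := leOfHom (Fam.Hom.map g c)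
          show C.obj c ≤ ⨆ a : {a : C.ι × I // a.1 = c}, C.obj a.1.1 ⊓ X a.1.2
          calc C.obj c = C.obj c ⊓ Y := (inf_eq_left.mpr hcY).symm
            _ = C.obj c ⊓ ⨆ i, X i := by rw [hs]
            _ = ⨆ i, C.obj c ⊓ X i := inf_iSup_eq _ _
            _ ≤ _ := iSup_le fun i => le_iSup_of_le ⟨(c, i), rfl⟩ le_rfl
        have heq : (hPB.isoIsPullback _ _ hP₀).hom ≫ Fam.pbFst C X = fst :=
          IsPullback.isoIsPullback_hom_fst _ _ hPB hP₀
        rw [← heq]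
        exact ⟨regularEpiOfIsoComp _ _ hre₀⟩
    · rintro ⟨⟨hre⟩, _⟩
      exact Fam.sup_eq_of_regularEpi X Y h hre
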